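/- Let A be a π-torsion-free ring over a DVR with uniformizer π such that A/πA is reduced. Define for x in A[1/π] the valuation v_A(x) = sup{n ∈ ℤ : π^{-n}x ∈ A} and norm |x|_A = |π|^{v_A(x)} (for a fixed 0 < |π| < 1). Then |f+g|_A ≤ max(|f|_A, |g|_A) and |f^n|_A = |f|_A^n for all f, g in A[1/π] and n ≥ 1. -/

import Mathlib

/-- Let `A` be a `π`-torsion-free ring over a DVR with uniformizer `π`
such that `A/πA` is reduced.  For `x ∈ A[1/π]` let `v_A x = sup{n : π^{-n} x ∈ A}`
(encoded below by: for every `n : ℤ`, `π^{-n}x ∈ A ↔ n ≤ v x`) and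
`|x|_A = |π|^{v_A x}` for a fixed `0 < |π| < 1`.  Then `|f+g|_A ≤ max (|f|_A) (|g|_A)`
(i.e. `min (v f) (v g) ≤ v (f+g)`) and `|f^n|_A = |f|_A^n` (i.e. `v (f^n) = n * v f`)
for all `f, g` in `A[1/π]` and `n ≥ 1`. -/
theorem stmt_1
    {O : Type*} [CommRing O] [IsDomain O] [IsDiscreteValuationRing O]
    {A : Type*} [CommRing A] [Algebra O A]
    (π : O) (hπ : Irreducible π)
    (htorsionfree : ∀ a : A, algebraMap O A π * a = 0 → a = 0)
    (hreduced : IsReduced (A ⧸ Ideal.span {algebraMap O A π}))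
    (L : Type*) [CommRing L] [Algebra A L]
    [IsLocalization.Away (algebraMap O A π) L]
    (u : Lˣ) (hu : (u : L) = algebraMap A L (algebraMap O A π))
    (v : L → ℤ)
    (hv : ∀ x : L, x ≠ 0 →
      ∀ n : ℤ, (∃ a : A, x = ((u ^ n : Lˣ) : L) * algebraMap A L a) ↔ n ≤ v x) :
    (∀ f g : L, f ≠ 0 → g ≠ 0 → f + g ≠ 0 → min (v f) (v g) ≤ v (f + g)) ∧
    (∀ f : L, f ≠ 0 → ∀ n : ℕ, 0 < n → v (f ^ n) = n * v f) := by
  set π' : A := algebraMap O A π with hπ'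
  -- powers of π' are regular
  have hregpow : ∀ (m : ℕ) (x : A), π' ^ m * x = 0 → x = 0 := by
    intro m
    induction m with
    | zero => intro x hx; simpa using hx
    | succ k ih =>
      intro x hx
      apply ih
      apply htorsionfree
      rw [← mul_assoc, mul_comm π' (π' ^ k), ← pow_succ]
      exact hx
  -- injectivity of A → L
  have hle : Submonoid.powers π' ≤ nonZeroDivisors A := by
    rw [Submonoid.powers_le, mem_nonZeroDivisors_iff_right]
    intro x hx
    apply htorsionfree
    rw [mul_comm]; exact hx
  have hinj : Function.Injective (algebraMap A L) :=
    IsLocalization.injective L hle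
  -- division by π' in A from division by u in L
  have hdiv : ∀ a : A, (∃ b : A, algebraMap A L a = (u : L) * algebraMap A L b) →
      ∃ b : A, a = π' * b := by
    intro a ⟨b, hb⟩
    refine ⟨b, hinj ?_⟩
    rw [map_mul, ← hu, hb]
  -- from ā nilpotent in A/π, divide by π'
  have hstep : ∀ a : A, ∀ n : ℕ, 0 < n → a ^ n ∈ Ideal.span {π'} → ∃ b : A, a = π' * b := by
    intro a n hn hmem
    have h1 : (Ideal.Quotient.mk (Ideal.span {π'}) a) ^ n = 0 := by
      rw [← map_pow, Ideal.Quotient.eq_zero_iff_mem]; exact hmem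
    have h2 : Ideal.Quotient.mk (Ideal.span {π'}) a = 0 :=
      hreduced.eq_zero _ ⟨n, h1⟩
    rw [Ideal.Quotient.eq_zero_iff_mem, Ideal.mem_span_singleton] at h2
    exact h2
  -- nilpotent elements of A are divisible by all powers of π'
  have hnilp : ∀ a : A, ∀ n : ℕ, 0 < n → a ^ n = 0 →
      ∀ k : ℕ, ∃ y : A, a = π' ^ k * y ∧ y ^ n = 0 := by
    intro a n hn ha k
    induction k with
    | zero => exact ⟨a, by simp, ha⟩
    | succ k ih =>
      obtain ⟨y, hy, hyn⟩ := ih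
      obtain ⟨z, hz⟩ := hstep y n hn (by rw [Ideal.mem_span_singleton]; exact ⟨0, by simp [hyn]⟩)
      refine ⟨z, ?_, ?_⟩
      · rw [hy, hz, pow_succ, mul_assoc]
      · apply hregpow n
        rw [← mul_pow, ← hz, hyn]
  -- key lemma: an element realizing its valuation is not divisible by π'
  have hmax : ∀ f : L, f ≠ 0 → ∀ a : A, f = ((u ^ (v f) : Lˣ) : L) * algebraMap A L a →
      ∀ b : A, a ≠ π' * b := by
    intro f hf a hfa b hab
    have : f = ((u ^ (v f + 1) : Lˣ) : L) * algebraMap A L b := by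
      conv_lhs => rw [hfa, hab]
      rw [map_mul, ← hu, zpow_add_one, Units.val_mul, mul_assoc]
    have := (hv f hf (v f + 1)).mp ⟨b, this⟩
    omega
  constructor
  · -- ultrametric inequality
    intro f g hf hg hfg
    set m := min (v f) (v g) with hm
    obtain ⟨a, ha⟩ := (hv f hf m).mpr (min_le_left _ _)
    obtain ⟨b, hb⟩ := (hv g hg m).mpr (min_le_right _ _)
    exact (hv (f + g) hfg m).mp ⟨a + b, by rw [ha, hb, map_add, mul_add]⟩
  · -- multiplicativity on powers
    intro f hf n hn
    obtain ⟨a, ha⟩ := (hv f hf (v f)).mpr le_rfl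
    have hfn : f ^ n = ((u ^ ((n : ℤ) * v f) : Lˣ) : L) * algebraMap A L (a ^ n) := by
      conv_lhs => rw [ha]
      rw [mul_pow, map_pow, ← Units.val_pow_eq_pow_val, ← zpow_natCast (u ^ (v f)) n,
        ← zpow_mul, mul_comm (v f) (n : ℤ)]
    have hfn0 : f ^ n ≠ 0 := by
      intro h0
      have h1 : algebraMap A L (a ^ n) = 0 := by
        have := h0 ▸ hfn
        have h2 := congrArg (fun z => ((u ^ (-((n : ℤ) * v f)) : Lˣ) : L) * z) this.symm
        simpa [← mul_assoc, ← Units.val_mul, ← zpow_add₀, ← zpow_add] using h2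
      have h2 : a ^ n = 0 := hinj (by rw [h1, map_zero])
      obtain ⟨y, hy, -⟩ := hnilp a n hn h2 1
      exact hmax f hf a ha y (by simpa using hy)
    have hge : (n : ℤ) * v f ≤ v (f ^ n) := (hv (f ^ n) hfn0 _).mp ⟨a ^ n, hfn⟩
    have hle2 : v (f ^ n) ≤ (n : ℤ) * v f := by
      by_contra hlt
      push_neg at hlt
      obtain ⟨b, hb⟩ := (hv (f ^ n) hfn0 ((n : ℤ) * v f + 1)).mpr (by omega)
      have hcanc : algebraMap A L (a ^ n) = (u : L) * algebraMap A L b := by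
        have heq : ((u ^ ((n : ℤ) * v f) : Lˣ) : L) * algebraMap A L (a ^ n)
            = ((u ^ ((n : ℤ) * v f) : Lˣ) : L) * ((u : L) * algebraMap A L b) := by
          rw [← hfn, hb, zpow_add_one, Units.val_mul, mul_assoc]
        exact (Units.mul_right_inj _).mp heq
      obtain ⟨c, hc⟩ := hdiv (a ^ n) ⟨b, hcanc⟩
      obtain ⟨d, hd⟩ := hstep a n hn (by rw [Ideal.mem_span_singleton]; exact ⟨c, hc⟩)
      exact hmax f hf a ha d hd
    omega
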